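/- Let Γ be a real symmetric N×N matrix with Γ_{jl} > 0 for j ≠ l, rows summing to zero, and let P(z) = exp(Γz)P₀ for P₀ ∈ ℝ^N with nonnegative entries and Σ_j (P₀)_j = R². Then P_j(z) → R²/N as z → ∞ for every j, and there exist constants C > 0 and Λ₂ < 0 (the second largest eigenvalue of Γ) such that sup_j |P_j(z) − R²/N| ≤ C e^{Λ₂ z} for all z ≥ 0. -/

import Mathlib

open Matrix Filter

lemma exp_mulVec_eig' {N : ℕ} (A : Matrix (Fin N) (Fin N) ℝ) (v : Fin N → ℝ) (μ : ℝ)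
    (h : A.mulVec v = μ • v) :
    (NormedSpace.exp A).mulVec v = Real.exp μ • v := by
  have hpow : ∀ n : ℕ, (A ^ n).mulVec v = μ ^ n • v := by
    intro n
    induction n with
    | zero => simp
    | succ n ih =>
      rw [pow_succ, ← Matrix.mulVec_mulVec, h, Matrix.mulVec_smul, ih, smul_smul, ← pow_succ']
  let f : Matrix (Fin N) (Fin N) ℝ →ₗ[ℝ] (Fin N → ℝ) :=
    { toFun := fun M => M.mulVec v
      map_add' := fun M₁ M₂ => Matrix.add_mulVec M₁ M₂ v
      map_smul' := fun a M => Matrix.smul_mulVec a M v }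
  let F := LinearMap.toContinuousLinearMap f
  letI : SeminormedRing (Matrix (Fin N) (Fin N) ℝ) := Matrix.linftyOpSemiNormedRing
  letI : NormedRing (Matrix (Fin N) (Fin N) ℝ) := Matrix.linftyOpNormedRing
  letI : NormedAlgebra ℝ (Matrix (Fin N) (Fin N) ℝ) := Matrix.linftyOpNormedAlgebra
  have hsummable : Summable fun n : ℕ => ((n.factorial : ℝ)⁻¹) • A ^ n :=
    NormedSpace.expSeries_summable' A
  have h1 : (NormedSpace.exp A).mulVec v
      = ∑' n : ℕ, (((n.factorial : ℝ)⁻¹) • A ^ n).mulVec v := by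
    rw [NormedSpace.exp_eq_tsum ℝ]
    exact F.map_tsum hsummable
  rw [h1]
  have h2 : ∀ n : ℕ, (((n.factorial : ℝ)⁻¹) • A ^ n).mulVec v
      = (((n.factorial : ℝ)⁻¹) * μ ^ n) • v := by
    intro n; rw [Matrix.smul_mulVec, hpow n, smul_smul]
  simp_rw [h2]
  rw [Summable.tsum_smul_const]
  · congr 1
    have hre : Real.exp μ = NormedSpace.exp μ := by rw [Real.exp_eq_exp_ℝ]
    rw [hre, NormedSpace.exp_eq_tsum ℝ]
    simp [smul_eq_mul]
  · simpa [smul_eq_mul] using NormedSpace.expSeries_summable' (𝕂 := ℝ) μ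

/-- Exponential convergence to equipartition for P(z) = exp(Γz)P₀. -/
theorem stmt_10 (N : ℕ) (hN : 2 ≤ N)
    (Γ : Matrix (Fin N) (Fin N) ℝ) (hsym : Γ.IsSymm)
    (hoff : ∀ j l, j ≠ l → 0 < Γ j l)
    (hrow : ∀ j, ∑ l, Γ j l = 0)
    (P₀ : Fin N → ℝ) (hP₀ : ∀ j, 0 ≤ P₀ j)
    (R : ℝ) (hR : 0 < R) (hsum : ∑ j, P₀ j = R ^ 2)
    (P : ℝ → Fin N → ℝ)
    (hP : ∀ z, P z = (NormedSpace.exp (z • Γ)).mulVec P₀) :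
    (∀ j, Tendsto (fun z => P z j) atTop (nhds (R ^ 2 / N))) ∧
    ∃ C > 0, ∃ Λ₂ < (0 : ℝ),
      (∃ v : Fin N → ℝ, v ≠ 0 ∧ Γ.mulVec v = Λ₂ • v) ∧
      (∀ μ : ℝ, (∃ v : Fin N → ℝ, v ≠ 0 ∧ Γ.mulVec v = μ • v) → μ ≠ 0 → μ ≤ Λ₂) ∧
      ∀ z ≥ (0 : ℝ), ∀ j, |P z j - R ^ 2 / N| ≤ C * Real.exp (Λ₂ * z) := by
  classical
  have hNpos : 0 < N := by omega
  -- symmetric dot product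
  have hdot : ∀ v w : Fin N → ℝ, v ⬝ᵥ Γ.mulVec w = Γ.mulVec v ⬝ᵥ w := by
    intro v w
    simp only [dotProduct, Matrix.mulVec, Finset.mul_sum, Finset.sum_mul]
    rw [Finset.sum_comm]
    exact Finset.sum_congr rfl fun j _ => Finset.sum_congr rfl fun l _ => by
      rw [hsym.apply]; ring
  -- quadratic form identity
  have hquad : ∀ v : Fin N → ℝ, 2 * (v ⬝ᵥ Γ.mulVec v) = - ∑ j, ∑ l, Γ j l * (v j - v l) ^ 2 := by
    intro v
    have expand : ∑ j, ∑ l, Γ j l * (v j - v l) ^ 2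
        = (∑ j, ∑ l, Γ j l * v j ^ 2) + (∑ j, ∑ l, Γ j l * v l ^ 2)
          - 2 * ∑ j, ∑ l, Γ j l * v j * v l := by
      rw [Finset.mul_sum, ← Finset.sum_add_distrib, ← Finset.sum_sub_distrib]
      refine Finset.sum_congr rfl fun j _ => ?_
      rw [Finset.mul_sum, ← Finset.sum_add_distrib, ← Finset.sum_sub_distrib]
      exact Finset.sum_congr rfl fun l _ => by ring
    have h1 : ∑ j, ∑ l, Γ j l * v j ^ 2 = 0 := by
      refine Finset.sum_eq_zero fun j _ => ?_
      rw [← Finset.sum_mul, hrow, zero_mul]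
    have h2 : ∑ j, ∑ l, Γ j l * v l ^ 2 = 0 := by
      rw [Finset.sum_comm]
      refine Finset.sum_eq_zero fun l _ => ?_
      have hc : ∀ j, Γ j l = Γ l j := fun j => hsym.apply l j
      simp_rw [hc]
      rw [← Finset.sum_mul, hrow, zero_mul]
    have h3 : v ⬝ᵥ Γ.mulVec v = ∑ j, ∑ l, Γ j l * v j * v l := by
      simp only [dotProduct, Matrix.mulVec, Finset.mul_sum]
      exact Finset.sum_congr rfl fun j _ => Finset.sum_congr rfl fun l _ => by ring
    rw [expand, h1, h2, h3]; ring
  have hSnn : ∀ v : Fin N → ℝ, 0 ≤ ∑ j, ∑ l, Γ j l * (v j - v l) ^ 2 := by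
    intro v
    refine Finset.sum_nonneg fun j _ => Finset.sum_nonneg fun l _ => ?_
    by_cases h : j = l
    · subst h; simp
    · exact mul_nonneg (hoff j l h).le (sq_nonneg _)
  have hdotpos : ∀ v : Fin N → ℝ, v ≠ 0 → 0 < v ⬝ᵥ v := by
    intro v hv
    obtain ⟨j, hj⟩ := Function.ne_iff.mp hv
    simp only [dotProduct]
    exact Finset.sum_pos' (fun i _ => mul_self_nonneg _)
      ⟨j, Finset.mem_univ j, mul_self_pos.mpr hj⟩
  -- an eigenvector gives nonpositive eigenvalue
  have heig_nonpos : ∀ (v : Fin N → ℝ) (m : ℝ), v ≠ 0 → Γ.mulVec v = m • v → m ≤ 0 := by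
    intro v m hv he
    have h1 : v ⬝ᵥ Γ.mulVec v = m * (v ⬝ᵥ v) := by
      rw [he, dotProduct_smul, smul_eq_mul]
    have h2 := hquad v
    have h3 := hSnn v
    nlinarith [hdotpos v hv]
  -- zero eigenvector is constant
  have heig_const : ∀ v : Fin N → ℝ, Γ.mulVec v = 0 → ∀ j l, v j = v l := by
    intro v he j l
    have h1 : v ⬝ᵥ Γ.mulVec v = 0 := by rw [he]; simp
    have h2 := hquad v
    have hterm : ∀ j' ∈ Finset.univ, ∀ l' ∈ Finset.univ,
        Γ j' l' * (v j' - v l') ^ 2 = 0 := by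
      have hS : ∑ j', ∑ l', Γ j' l' * (v j' - v l') ^ 2 = 0 := by linarith
      have := (Finset.sum_eq_zero_iff_of_nonneg (fun j' _ =>
        Finset.sum_nonneg fun l' _ => by
          by_cases h : j' = l'
          · subst h; simp
          · exact mul_nonneg (hoff j' l' h).le (sq_nonneg _))).mp hS
      intro j' hj' l' hl'
      exact (Finset.sum_eq_zero_iff_of_nonneg (fun l' _ => by
        by_cases h : j' = l'
        · subst h; simp
        · exact mul_nonneg (hoff j' l' h).le (sq_nonneg _))).mp (this j' hj') l' hl'
    by_cases h : j = l
    · rw [h]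
    · have := hterm j (Finset.mem_univ j) l (Finset.mem_univ l)
      have hg := hoff j l h
      have : (v j - v l) ^ 2 = 0 := by
        rcases mul_eq_zero.mp this with h' | h'
        · exact absurd h' hg.ne'
        · exact h'
      have := pow_eq_zero_iff (n := 2) (by norm_num) |>.mp this
      linarith
  -- spectral setup
  have hH : Γ.IsHermitian := by
    rw [Matrix.IsHermitian, Matrix.conjTranspose_eq_transpose_of_trivial]
    exact hsym
  set u : Fin N → (Fin N → ℝ) := fun k => ⇑(hH.eigenvectorBasis k) with hu
  set d : Fin N → ℝ := hH.eigenvalues with hd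
  have heigB : ∀ k, Γ.mulVec (u k) = d k • u k := fun k => hH.mulVec_eigenvectorBasis k
  have hBo : ∀ k l, u k ⬝ᵥ u l = if k = l then 1 else 0 := by
    intro k l
    have h := orthonormal_iff_ite.mp hH.eigenvectorBasis.orthonormal k l
    simpa [PiLp.inner_apply, RCLike.inner_apply, dotProduct, mul_comm] using h
  have hBnz : ∀ k, u k ≠ 0 := by
    intro k hk
    have := hBo k k
    rw [hk] at this
    simp at this
  -- expansion in eigenbasis
  have hrepr : ∀ w : Fin N → ℝ, w = fun j => ∑ k, (u k ⬝ᵥ w) * u k j := by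
    intro w
    have h := congrArg WithLp.ofLp (hH.eigenvectorBasis.sum_repr (WithLp.toLp 2 w))
    simp only [WithLp.ofLp_sum, WithLp.ofLp_toLp] at h
    funext j
    conv_lhs => rw [← h]
    rw [Finset.sum_apply]
    refine Finset.sum_congr rfl fun k _ => ?_
    rw [OrthonormalBasis.repr_apply_apply]
    simp only [WithLp.ofLp_smul, Pi.smul_apply, smul_eq_mul]
    simp [PiLp.inner_apply, RCLike.inner_apply, dotProduct]
    simp only [hu, mul_comm]
  -- coefficients
  set c : Fin N → ℝ := fun k => u k ⬝ᵥ P₀ with hc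
  -- formula for P z j
  have hPz : ∀ z : ℝ, ∀ j, P z j = ∑ k, c k * Real.exp (z * d k) * u k j := by
    intro z j
    rw [hP]
    have h₀ : P₀ = ∑ k, c k • u k := by
      rw [hrepr P₀]
      funext i
      rw [Finset.sum_apply]
      rfl
    conv_lhs => rw [h₀]
    have hmv : (NormedSpace.exp (z • Γ)).mulVec (∑ k, c k • u k)
        = ∑ k, c k • ((NormedSpace.exp (z • Γ)).mulVec (u k)) := by
      rw [show ∀ M : Matrix (Fin N) (Fin N) ℝ, ∀ v, M.mulVec v = M.mulVecLin v from
        fun _ _ => rfl]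
      rw [map_sum]
      exact Finset.sum_congr rfl fun k _ => LinearMap.map_smul _ _ _
    rw [hmv]
    have heigz : ∀ k, (NormedSpace.exp (z • Γ)).mulVec (u k) = Real.exp (z * d k) • u k := by
      intro k
      apply exp_mulVec_eig'
      rw [Matrix.smul_mulVec, heigB k, smul_smul]
    simp_rw [heigz]
    rw [Finset.sum_apply]
    exact Finset.sum_congr rfl fun k _ => by
      simp only [Pi.smul_apply, smul_eq_mul]; ring
  -- existence of the zero eigenvalue
  have hone : Γ.mulVec (fun _ => (1:ℝ)) = 0 := by
    funext j
    simp only [Matrix.mulVec, dotProduct, mul_one]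
    exact hrow j
  have honenz : (fun _ => (1:ℝ)) ≠ (0 : Fin N → ℝ) := by
    intro h
    have := congrFun h ⟨0, hNpos⟩
    simp at this
  have hk0 : ∃ k, d k = 0 := by
    by_contra h
    push_neg at h
    have hco : ∀ k, u k ⬝ᵥ (fun _ => (1:ℝ)) = 0 := by
      intro k
      have h1 : Γ.mulVec (u k) ⬝ᵥ (fun _ => (1:ℝ)) = 0 := by
        rw [← hdot, hone]
        simp
      rw [heigB k, smul_dotProduct, smul_eq_mul] at h1
      exact (mul_eq_zero.mp h1).resolve_left (h k)
    apply honenz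
    rw [hrepr (fun _ => (1:ℝ))]
    funext j
    simp [hco]
  obtain ⟨k₀, hdk₀⟩ := hk0
  -- the zero eigenvector is constant with square 1/N
  have hconst : ∀ j l, u k₀ j = u k₀ l := by
    apply heig_const
    rw [heigB k₀, hdk₀, zero_smul]
  set b : ℝ := u k₀ ⟨0, hNpos⟩ with hb
  have hub : ∀ j, u k₀ j = b := fun j => hconst j ⟨0, hNpos⟩
  have hbsq : (N : ℝ) * b ^ 2 = 1 := by
    have h := hBo k₀ k₀
    rw [if_pos rfl] at h
    simp only [dotProduct, hub] at h
    rw [Finset.sum_const, Finset.card_univ, Fintype.card_fin, nsmul_eq_mul] at h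
    nlinarith [h]
  have hbne : b ≠ 0 := by
    intro h
    rw [h] at hbsq
    simp at hbsq
  -- the constant term equals R²/N
  have hconst_term : ∀ j, c k₀ * u k₀ j = R ^ 2 / N := by
    intro j
    have hck : c k₀ = b * R ^ 2 := by
      rw [hc]
      simp only [dotProduct, hub]
      rw [← Finset.mul_sum, hsum]
    rw [hck, hub j]
    have : (N:ℝ) ≠ 0 := Nat.cast_ne_zero.mpr hNpos.ne'
    field_simp
    nlinarith [hbsq]
  -- eigenvalues other than k₀ are negative
  have huniq : ∀ k, k ≠ k₀ → d k ≠ 0 := by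
    intro k hk hdk
    have hconstk : ∀ j l, u k j = u k l := by
      apply heig_const
      rw [heigB k, hdk, zero_smul]
    set b' : ℝ := u k ⟨0, hNpos⟩ with hb'
    have hub' : ∀ j, u k j = b' := fun j => hconstk j ⟨0, hNpos⟩
    have horth := hBo k k₀
    rw [if_neg hk] at horth
    simp only [dotProduct, hub, hub'] at horth
    rw [Finset.sum_const, Finset.card_univ, Fintype.card_fin, nsmul_eq_mul] at horth
    have hb'0 : b' = 0 := by
      have hN0 : (N:ℝ) ≠ 0 := Nat.cast_ne_zero.mpr hNpos.ne'
      rcases mul_eq_zero.mp horth with h | h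
      · exact absurd h hN0
      · exact (mul_eq_zero.mp h).resolve_right hbne
    apply hBnz k
    funext j
    rw [hub' j, hb'0]
    rfl
  have hdneg : ∀ k, k ≠ k₀ → d k < 0 :=
    fun k hk => lt_of_le_of_ne (heig_nonpos (u k) (d k) (hBnz k) (heigB k)) (huniq k hk)
  -- define Λ₂
  obtain ⟨k₁, hk₁⟩ := Fintype.exists_ne_of_one_lt_card (by simp; omega) k₀
  have hne : (Finset.univ.erase k₀).Nonempty :=
    ⟨k₁, Finset.mem_erase.mpr ⟨hk₁, Finset.mem_univ _⟩⟩
  set Λ₂ : ℝ := (Finset.univ.erase k₀).sup' hne d with hΛ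
  have hΛneg : Λ₂ < 0 := by
    rw [hΛ, Finset.sup'_lt_iff]
    exact fun k hk => hdneg k (Finset.ne_of_mem_erase hk)
  obtain ⟨k₂, hk₂mem, hk₂⟩ := Finset.exists_mem_eq_sup' hne d
  -- eigenvector for Λ₂
  have hΛvec : ∃ v : Fin N → ℝ, v ≠ 0 ∧ Γ.mulVec v = Λ₂ • v := by
    refine ⟨u k₂, hBnz k₂, ?_⟩
    rw [heigB k₂, hΛ, hk₂]
  -- maximality
  have hΛmax : ∀ μ : ℝ, (∃ v : Fin N → ℝ, v ≠ 0 ∧ Γ.mulVec v = μ • v) → μ ≠ 0 → μ ≤ Λ₂ := by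
    rintro μ ⟨v, hv, he⟩ hμ
    have hex : ∃ k, u k ⬝ᵥ v ≠ 0 := by
      by_contra h
      push_neg at h
      apply hv
      rw [hrepr v]
      funext j
      simp [h]
    obtain ⟨k, hk⟩ := hex
    have heq : d k * (u k ⬝ᵥ v) = μ * (u k ⬝ᵥ v) := by
      have h1 : Γ.mulVec (u k) ⬝ᵥ v = u k ⬝ᵥ Γ.mulVec v := (hdot (u k) v).symm
      rw [heigB k, he, smul_dotProduct, dotProduct_smul,
        smul_eq_mul, smul_eq_mul] at h1
      exact h1
    have hμk : μ = d k := by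
      have := mul_right_cancel₀ hk heq
      exact this.symm
    have hkk₀ : k ≠ k₀ := by
      intro h
      rw [h, hdk₀] at hμk
      exact hμ hμk
    rw [hμk, hΛ]
    exact Finset.le_sup' d (Finset.mem_erase.mpr ⟨hkk₀, Finset.mem_univ _⟩)
  -- constant C
  set C : ℝ := 1 + ∑ k ∈ Finset.univ.erase k₀, |c k| with hC
  have hCpos : 0 < C := by
    rw [hC]
    have : 0 ≤ ∑ k ∈ Finset.univ.erase k₀, |c k| :=
      Finset.sum_nonneg fun k _ => abs_nonneg _
    linarith
  -- u entries bounded by 1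
  have hub1 : ∀ k j, |u k j| ≤ 1 := by
    intro k j
    have h := hBo k k
    rw [if_pos rfl] at h
    have hle : u k j * u k j ≤ 1 := by
      rw [← h]
      simp only [dotProduct]
      refine Finset.single_le_sum (fun i _ => mul_self_nonneg (u k i)) (Finset.mem_univ j)
    rw [abs_le]
    constructor <;> nlinarith
  -- the key bound
  have hbound : ∀ z ≥ (0:ℝ), ∀ j, |P z j - R ^ 2 / N| ≤ C * Real.exp (Λ₂ * z) := by
    intro z hz j
    have hsplit : P z j - R ^ 2 / N
        = ∑ k ∈ Finset.univ.erase k₀, c k * Real.exp (z * d k) * u k j := by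
      rw [hPz z j, ← Finset.add_sum_erase _ _ (Finset.mem_univ k₀), hdk₀]
      rw [mul_zero, Real.exp_zero, mul_one, hconst_term j]
      ring
    rw [hsplit]
    calc |∑ k ∈ Finset.univ.erase k₀, c k * Real.exp (z * d k) * u k j|
        ≤ ∑ k ∈ Finset.univ.erase k₀, |c k * Real.exp (z * d k) * u k j| :=
          Finset.abs_sum_le_sum_abs _ _
      _ ≤ ∑ k ∈ Finset.univ.erase k₀, |c k| * Real.exp (Λ₂ * z) := by
          refine Finset.sum_le_sum fun k hk => ?_
          rw [abs_mul, abs_mul, Real.abs_exp]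
          have h1 : Real.exp (z * d k) ≤ Real.exp (Λ₂ * z) := by
            apply Real.exp_le_exp.mpr
            have : d k ≤ Λ₂ := Finset.le_sup' d hk
            calc z * d k ≤ z * Λ₂ := mul_le_mul_of_nonneg_left this hz
              _ = Λ₂ * z := mul_comm _ _
          calc |c k| * Real.exp (z * d k) * |u k j|
              ≤ |c k| * Real.exp (z * d k) * 1 := by
                apply mul_le_mul_of_nonneg_left (hub1 k j)
                positivity
            _ = |c k| * Real.exp (z * d k) := mul_one _
            _ ≤ |c k| * Real.exp (Λ₂ * z) :=
                mul_le_mul_of_nonneg_left h1 (abs_nonneg _)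
      _ = (∑ k ∈ Finset.univ.erase k₀, |c k|) * Real.exp (Λ₂ * z) :=
          (Finset.sum_mul _ _ _).symm
      _ ≤ C * Real.exp (Λ₂ * z) := by
          apply mul_le_mul_of_nonneg_right _ (Real.exp_nonneg _)
          rw [hC]; linarith
  -- tendsto from the bound
  have htends : ∀ j, Tendsto (fun z => P z j) atTop (nhds (R ^ 2 / N)) := by
    intro j
    rw [tendsto_iff_dist_tendsto_zero]
    have hg : Tendsto (fun z : ℝ => C * Real.exp (Λ₂ * z)) atTop (nhds 0) := by
      have h1 : Tendsto (fun z : ℝ => Λ₂ * z) atTop atBot :=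
        Tendsto.const_mul_atTop_of_neg hΛneg tendsto_id
      have h2 : Tendsto (fun z : ℝ => Real.exp (Λ₂ * z)) atTop (nhds 0) :=
        Real.tendsto_exp_atBot.comp h1
      simpa using h2.const_mul C
    refine squeeze_zero' ?_ ?_ hg
    · exact Eventually.of_forall fun z => dist_nonneg
    · filter_upwards [eventually_ge_atTop (0:ℝ)] with z hz
      rw [Real.dist_eq]
      exact hbound z hz j
  exact ⟨htends, C, hCpos, Λ₂, hΛneg, hΛvec, hΛmax, hbound⟩
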